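/- Under the null hypothesis θ_C = θ_D = θ, the conditional distribution of the final trial state X_n given the total number of successes s(X_n) = s' does not depend on θ; specifically P(X_n = x | s(X_n) = s') = C(n, s')^{-1} · g(x) · 1[s(x) = s'], where g(x) is the parameter-free path-count coefficient of the response-adaptive design. -/

import Mathlib

open Finset

/-- A step in the trial: (allocated to control C?, success?). -/
abbrev TStep : Type := Bool × Bool

/-- A trial history/path: list of (allocation, outcome) pairs. -/
abbrev TPath : Type := List TStep

/-- Probability of a path: product over participants of the allocation probability
(given the history so far) times the Bernoulli outcome probability. -/
noncomputable def pathProbAux (π : TPath → ℝ) (θC θD : ℝ) : TPath → TPath → ℝ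
  | _, [] => 1
  | h, a :: rest =>
    ((if a.1 then π h else 1 - π h) *
      (if a.1 then (if a.2 then θC else 1 - θC) else (if a.2 then θD else 1 - θD))) *
    pathProbAux π θC θD (h ++ [a]) rest

/-- Product of allocation probabilities along the path. -/
noncomputable def allocWeightAux (π : TPath → ℝ) : TPath → TPath → ℝ
  | _, [] => 1
  | h, a :: rest => (if a.1 then π h else 1 - π h) * allocWeightAux π (h ++ [a]) rest

/-- Successes on arm C along a path. -/
def cntSC (p : TPath) : ℕ := (p.filter (fun a => a.1 && a.2)).length
/-- Successes on arm D along a path. -/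
def cntSD (p : TPath) : ℕ := (p.filter (fun a => !a.1 && a.2)).length
/-- Allocations to arm C along a path. -/
def cntNC (p : TPath) : ℕ := (p.filter (fun a => a.1)).length
/-- Allocations to arm D along a path. -/
def cntND (p : TPath) : ℕ := (p.filter (fun a => !a.1)).length

/-- The final state (s_C, s_D, n_C, n_D) of a path. -/
def pstate (p : TPath) : ℕ × ℕ × ℕ × ℕ := (cntSC p, cntSD p, cntNC p, cntND p)

/-- Total number of successes of a state. -/
def sTot (x : ℕ × ℕ × ℕ × ℕ) : ℕ := x.1 + x.2.1

/-- The parameter-free design coefficient `g(x)`: sum of allocation-path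
probabilities over all paths of length `n` ending in state `x`. -/
noncomputable def gcoef (n : ℕ) (π : TPath → ℝ) (x : ℕ × ℕ × ℕ × ℕ) : ℝ :=
  ∑ ω : Fin n → TStep,
    if pstate (List.ofFn ω) = x then allocWeightAux π [] (List.ofFn ω) else 0

/-- Probability of ending in final state `x` under parameters `(θC, θD)`. -/
noncomputable def Pfin (n : ℕ) (π : TPath → ℝ) (θC θD : ℝ) (x : ℕ × ℕ × ℕ × ℕ) : ℝ :=
  ∑ ω : Fin n → TStep,
    if pstate (List.ofFn ω) = x then pathProbAux π θC θD [] (List.ofFn ω) else 0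

/-- Probability that the total number of successes equals `s'` under the null `θC = θD = θ`. -/
noncomputable def PtotS (n : ℕ) (π : TPath → ℝ) (θ : ℝ) (s' : ℕ) : ℝ :=
  ∑ ω : Fin n → TStep,
    if sTot (pstate (List.ofFn ω)) = s' then pathProbAux π θ θ [] (List.ofFn ω) else 0


/-- Total successes along a path. -/
def cntS (p : TPath) : ℕ := (p.filter (fun a => a.2)).length
/-- Total failures along a path. -/
def cntF (p : TPath) : ℕ := (p.filter (fun a => !a.2)).length

lemma cntS_eq (p : TPath) : cntS p = cntSC p + cntSD p := by
  induction p with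
  | nil => rfl
  | cons a rest ih =>
    obtain ⟨c, b⟩ := a
    cases c <;> cases b <;>
      simp [cntS, cntSC, cntSD, List.filter_cons] at * <;> omega

lemma cntS_add_cntF (p : TPath) : cntS p + cntF p = p.length := by
  induction p with
  | nil => rfl
  | cons a rest ih =>
    cases hb : a.2 <;> simp [cntS, cntF, List.filter_cons, hb] at * <;> omega

lemma ppa (π : TPath → ℝ) (θ : ℝ) : ∀ (p h : TPath),
    pathProbAux π θ θ h p = allocWeightAux π h p * θ ^ cntS p * (1-θ) ^ cntF p := by
  intro p
  induction p with
  | nil => intro h; simp [pathProbAux, allocWeightAux, cntS, cntF]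
  | cons a rest ih =>
    intro h
    cases hb : a.2 <;>
      simp [pathProbAux, allocWeightAux, cntS, cntF, List.filter_cons, hb, ih, pow_succ] <;>
      ring

lemma ofFn_cons {n : ℕ} (a : TStep) (ω : Fin n → TStep) :
    List.ofFn (Fin.cons a ω) = a :: List.ofFn ω := by
  simp [List.ofFn_succ]

lemma cntS_cons (a : TStep) (l : TPath) :
    cntS (a :: l) = cntS l + (if a.2 then 1 else 0) := by
  cases hb : a.2 <;> simp [cntS, List.filter_cons, hb]

lemma alloc_cons (π : TPath → ℝ) (h : TPath) (a : TStep) (l : TPath) :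
    allocWeightAux π h (a :: l) = (if a.1 then π h else 1 - π h) * allocWeightAux π (h ++ [a]) l :=
  rfl

lemma key (π : TPath → ℝ) : ∀ (n : ℕ) (s : ℕ) (h : TPath),
    (∑ ω : Fin n → TStep,
      if cntS (List.ofFn ω) = s then allocWeightAux π h (List.ofFn ω) else 0)
      = (n.choose s : ℝ) := by
  intro n
  induction n with
  | zero =>
    intro s h
    cases s <;> simp [cntS, allocWeightAux]
  | succ n ih =>
    intro s h
    have cons_sum : ∀ a : TStep,
        (∑ ω : Fin n → TStep,
          if cntS (a :: List.ofFn ω) = s then allocWeightAux π h (a :: List.ofFn ω) else 0)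
        = (if a.1 then π h else 1 - π h) *
            (if a.2 then (if s = 0 then 0 else (n.choose (s-1) : ℝ)) else (n.choose s : ℝ)) := by
      intro a
      have e1 : ∀ ω : Fin n → TStep,
          (if cntS (a :: List.ofFn ω) = s then allocWeightAux π h (a :: List.ofFn ω) else 0)
          = (if a.1 then π h else 1 - π h) *
              (if cntS (a :: List.ofFn ω) = s then allocWeightAux π (h ++ [a]) (List.ofFn ω)
               else 0) := by
        intro ω
        rw [mul_ite, mul_zero, alloc_cons]
      rw [Finset.sum_congr rfl fun ω _ => e1 ω, ← Finset.mul_sum]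
      congr 1
      cases hb : a.2
      · simp only [cntS_cons, hb, Bool.false_eq_true, if_false, add_zero]
        exact ih s (h ++ [a])
      · cases s with
        | zero => simp [cntS_cons, hb]
        | succ s =>
          simp only [cntS_cons, hb, if_true, Nat.succ_ne_zero, if_false, Nat.succ_sub_one,
            add_left_inj]
          exact ih s (h ++ [a])
    rw [← Equiv.sum_comp (Fin.consEquiv (fun _ : Fin (n+1) => TStep)), Fintype.sum_prod_type]
    simp only [Fin.consEquiv, Equiv.coe_fn_mk, ofFn_cons]
    rw [Finset.sum_congr rfl fun a _ => cons_sum a, Fintype.sum_prod_type]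
    simp only [Fintype.sum_bool]
    cases s with
    | zero => simp
    | succ s =>
      simp only [Nat.succ_ne_zero, if_false, Nat.succ_sub_one, Nat.choose_succ_succ n s]
      push_cast
      ring

lemma sTot_pstate (p : TPath) : sTot (pstate p) = cntS p := by
  simp [sTot, pstate, cntS_eq]

lemma PtotS_eq (n : ℕ) (π : TPath → ℝ) (θ : ℝ) (s' : ℕ) :
    PtotS n π θ s' = θ ^ s' * (1-θ) ^ (n - s') * (n.choose s' : ℝ) := by
  rw [PtotS, ← key π n s' [], Finset.mul_sum]
  refine Finset.sum_congr rfl fun ω _ => ?_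
  have hlen : (List.ofFn ω).length = n := List.length_ofFn
  have hsum := cntS_add_cntF (List.ofFn ω)
  rw [sTot_pstate, ppa]
  split_ifs with h
  · rw [h, show cntF (List.ofFn ω) = n - s' by omega]
    ring
  · simp

lemma Pfin_eq (n : ℕ) (π : TPath → ℝ) (θ : ℝ) (s' : ℕ) (x : ℕ × ℕ × ℕ × ℕ)
    (hx : sTot x = s') :
    Pfin n π θ θ x = θ ^ s' * (1-θ) ^ (n - s') * gcoef n π x := by
  rw [Pfin, gcoef, Finset.mul_sum]
  refine Finset.sum_congr rfl fun ω _ => ?_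
  split_ifs with h
  · have hlen : (List.ofFn ω).length = n := List.length_ofFn
    have hsum := cntS_add_cntF (List.ofFn ω)
    have hcs : cntS (List.ofFn ω) = s' := by rw [← sTot_pstate, h, hx]
    rw [ppa, hcs, show cntF (List.ofFn ω) = n - s' by omega]
    ring
  · simp

/-- under the null hypothesis `θC = θD = θ`, the conditional distribution
of the final state given `s(X_n) = s'` is `C(n,s')⁻¹ · g(x) · 1[s(x) = s']`,
which does not depend on `θ`. -/
theorem statement1 (n : ℕ) (π : TPath → ℝ) (hπ : ∀ h, π h ∈ Set.Icc (0:ℝ) 1)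
    (θ : ℝ) (hθ : θ ∈ Set.Ioo (0:ℝ) 1) (s' : ℕ) (hs : s' ≤ n) (x : ℕ × ℕ × ℕ × ℕ) :
    (if sTot x = s' then Pfin n π θ θ x else 0) / PtotS n π θ s'
      = (n.choose s' : ℝ)⁻¹ * gcoef n π x * (if sTot x = s' then 1 else 0) := by
  have hC : (0:ℝ) < (n.choose s' : ℝ) := by exact_mod_cast Nat.choose_pos hs
  have hK : (0:ℝ) < θ ^ s' * (1-θ) ^ (n - s') :=
    mul_pos (pow_pos hθ.1 _) (pow_pos (by linarith [hθ.2]) _)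
  by_cases hx : sTot x = s'
  · rw [if_pos hx, if_pos hx, Pfin_eq n π θ s' x hx, PtotS_eq]
    field_simp
    have h1 : θ ≠ 0 := hθ.1.ne'
    have h2 : (1:ℝ) - θ ≠ 0 := (sub_pos.mpr hθ.2).ne'
    exact mul_div_cancel_left₀ _ hK.ne'
  · simp [hx]
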